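/- Under the Weierstrass decomposition hypothesis, if every eigenvalue a of the matrix J satisfies |a| < 1 (i.e. all finite eigenvalues of the pencil sF − G lie within the open unit disc), then for every initial condition Y_0 ∈ ℂ^m the optimal solution Ŷ_k = Q_p J^k (Q_p^*Q_p)^{-1} Q_p^* Y_0 converges to the zero vector as k → ∞. -/

import Mathlib

open Matrix Filter Topology
open scoped NNReal ENNReal

noncomputable section

/-- Euclidean (ℓ²) norm on ℂ-vectors indexed by a finite type. -/
def euclNorm {n : Type*} [Fintype n] (v : n → ℂ) : ℝ :=
  ‖(WithLp.equiv 2 (n → ℂ)).symm v‖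

/-- Operator norm of a matrix, induced by the Euclidean norms. -/
def matOpNorm {α β : Type*} [Fintype α] [Fintype β] [DecidableEq β]
    (A : Matrix α β ℂ) : ℝ :=
  ‖LinearMap.toContinuousLinearMap (Matrix.toEuclideanLin A)‖

/-- In a complex Banach algebra, if all spectral values of `a` lie in the open
unit disc, then `‖a ^ n‖ → 0`. -/
lemma pow_norm_tendsto_zero {A : Type*} [NormedRing A] [NormedAlgebra ℂ A]
    [CompleteSpace A] [NormOneClass A] (a : A)
    (h : ∀ z ∈ spectrum ℂ a, ‖z‖₊ < 1) :
    Tendsto (fun n : ℕ => ‖a ^ n‖) atTop (𝓝 0) := by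
  haveI : Nontrivial A := ⟨1, 0, fun h => by simpa [h] using (norm_one (α := A))⟩
  have hsr : spectralRadius ℂ a < (1 : ℝ≥0) :=
    spectrum.spectralRadius_lt_of_forall_lt a h
  obtain ⟨r, hr1, hr2⟩ := exists_between hsr
  have hrne : r ≠ ⊤ := (hr2.trans_le le_top).ne
  lift r to NNReal using hrne
  have hgel := spectrum.pow_nnnorm_pow_one_div_tendsto_nhds_spectralRadius a
  have hev : ∀ᶠ n : ℕ in atTop, (‖a ^ n‖₊ : ENNReal) ^ (1 / (n : ℝ)) < r :=
    hgel.eventually_lt_const hr1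
  have hr2' : (r : ℝ) < 1 := by exact_mod_cast hr2
  have hbound : ∀ᶠ n : ℕ in atTop, ‖a ^ n‖ ≤ (r : ℝ) ^ n := by
    filter_upwards [hev, eventually_ge_atTop 1] with n hn hn1
    have hn0 : (n : ℝ) ≠ 0 := by positivity
    have : ((‖a ^ n‖₊ : ENNReal) ^ (1 / (n : ℝ))) ^ (n : ℝ) < (r : ENNReal) ^ (n : ℝ) :=
      ENNReal.rpow_lt_rpow hn (by positivity)
    rw [← ENNReal.rpow_mul, one_div, inv_mul_cancel₀ hn0, ENNReal.rpow_one,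
      ENNReal.rpow_natCast] at this
    have h2 : ‖a ^ n‖₊ ≤ r ^ n := by exact_mod_cast this.le
    exact_mod_cast h2
  have hgeo : Tendsto (fun n : ℕ => (r : ℝ) ^ n) atTop (𝓝 0) :=
    tendsto_pow_atTop_nhds_zero_of_lt_one r.coe_nonneg hr2'
  exact squeeze_zero' (Eventually.of_forall fun n => norm_nonneg _) hbound hgeo

/-- Theorem 3.2 (sufficiency): if every eigenvalue of `J` lies in the open unit
disc, then every optimal solution tends to `0`. -/
theorem optimal_solution_tendsto_zero (p q : ℕ) (hp : 1 ≤ p)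
    (F G P Q : Matrix (Fin p ⊕ Fin q) (Fin p ⊕ Fin q) ℂ)
    (J : Matrix (Fin p) (Fin p) ℂ) (H : Matrix (Fin q) (Fin q) ℂ)
    (hP : IsUnit P) (hQ : IsUnit Q) (hH : IsNilpotent H)
    (hF : P * F * Q = Matrix.fromBlocks 1 0 0 H)
    (hG : P * G * Q = Matrix.fromBlocks J 0 0 1)
    (Qp : Matrix (Fin p ⊕ Fin q) (Fin p) ℂ)
    (hQp : Qp = Q.submatrix id Sum.inl)
    (hspec : ∀ a ∈ spectrum ℂ J, ‖a‖ < 1) :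
    ∀ Y0 : (Fin p ⊕ Fin q) → ℂ,
      Tendsto
        (fun k : ℕ =>
          euclNorm (Qp.mulVec ((J ^ k).mulVec (((Qpᴴ * Qp)⁻¹ * Qpᴴ).mulVec Y0))))
        atTop (𝓝 0) := by
  intro Y0
  haveI : Nonempty (Fin p) := ⟨⟨0, hp⟩⟩
  set w : Fin p → ℂ := ((Qpᴴ * Qp)⁻¹ * Qpᴴ).mulVec Y0 with hw
  set T : EuclideanSpace ℂ (Fin p) →L[ℂ] EuclideanSpace ℂ (Fin p) :=
    Matrix.toEuclideanCLM (𝕜 := ℂ) J with hT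
  have hspecT : ∀ z ∈ spectrum ℂ T, ‖z‖₊ < 1 := by
    intro z hz
    rw [hT, AlgEquiv.spectrum_eq (Matrix.toEuclideanCLM (n := Fin p) (𝕜 := ℂ)) J] at hz
    have := hspec z hz
    rw [← NNReal.coe_lt_coe]
    simpa [coe_nnnorm] using this
  have htend : Tendsto (fun k : ℕ => ‖T ^ k‖) atTop (𝓝 0) :=
    pow_norm_tendsto_zero T hspecT
  have hbound : ∀ k : ℕ,
      euclNorm (Qp.mulVec ((J ^ k).mulVec w)) ≤
        matOpNorm Qp * (‖T ^ k‖ * euclNorm w) := by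
    intro k
    have h1 : euclNorm (Qp.mulVec ((J ^ k).mulVec w)) ≤
        matOpNorm Qp * euclNorm ((J ^ k).mulVec w) := by
      have := (LinearMap.toContinuousLinearMap (Matrix.toEuclideanLin Qp)).le_opNorm
        ((WithLp.equiv 2 (Fin p → ℂ)).symm ((J ^ k).mulVec w))
      simpa [euclNorm, matOpNorm, WithLp.equiv_symm_apply, Matrix.toEuclideanLin_apply_piLp_toLp] using this
    have h2 : euclNorm ((J ^ k).mulVec w) ≤ ‖T ^ k‖ * euclNorm w := by
      have heq : (WithLp.equiv 2 (Fin p → ℂ)).symm ((J ^ k).mulVec w) =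
          (T ^ k) ((WithLp.equiv 2 (Fin p → ℂ)).symm w) := by
        rw [hT, ← map_pow (Matrix.toEuclideanCLM (𝕜 := ℂ)) J k,
          WithLp.equiv_symm_apply, Matrix.toEuclideanCLM_toLp]
      have := (T ^ k).le_opNorm ((WithLp.equiv 2 (Fin p → ℂ)).symm w)
      rw [euclNorm, heq]
      simpa [euclNorm] using this
    calc euclNorm (Qp.mulVec ((J ^ k).mulVec w))
        ≤ matOpNorm Qp * euclNorm ((J ^ k).mulVec w) := h1
      _ ≤ matOpNorm Qp * (‖T ^ k‖ * euclNorm w) := by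
          apply mul_le_mul_of_nonneg_left h2
          exact norm_nonneg _
  have hg : Tendsto (fun k : ℕ => matOpNorm Qp * (‖T ^ k‖ * euclNorm w)) atTop (𝓝 0) := by
    have := (htend.mul_const (euclNorm w)).const_mul (matOpNorm Qp)
    simpa using this
  exact squeeze_zero (fun k => by
    simpa [euclNorm] using norm_nonneg
      ((WithLp.equiv 2 ((Fin p ⊕ Fin q) → ℂ)).symm (Qp.mulVec ((J ^ k).mulVec w)))) hbound hg
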